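/- arXiv:1301.0543 — 2 statements merged into one kernel-verified Lean document; each statement's English description precedes it below -/
import Mathlib

section
/- Let g be a Lorentzian 3×3 real symmetric matrix, g8 an invertible 8×8 real symmetric matrix, c, A ∈ ℝ, and set f := (1 + A·c)² − A²·|g|. If f ≤ 0, then there exist no invertible 3×3 real symmetric matrix g', invertible 8×8 real symmetric matrix g8' and c' ∈ ℝ such that U_Ω(A)ᵀ · M_C(g, g8, c) · U_Ω(A) = M_C(g', g8', c'): after such a timelike Ω-shift the dual background cannot be described by a metric and 3-form alone. -/
open Matrix

/-- The (g,C)-frame generalised metric: a 14×14 matrix in 3+3+8 block form. -/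
noncomputable def MC (g : Matrix (Fin 3) (Fin 3) ℝ) (g8 : Matrix (Fin 8) (Fin 8) ℝ) (c : ℝ) :
    Matrix ((Fin 3 ⊕ Fin 3) ⊕ Fin 8) ((Fin 3 ⊕ Fin 3) ⊕ Fin 8) ℝ :=
  |g.det * g8.det| ^ (-(1 : ℝ) / 2) •
    fromBlocks
      (fromBlocks ((1 + c ^ 2 / g.det) • g) ((c / g.det) • g) ((c / g.det) • g)
        ((1 / g.det) • g))
      0 0 g8

/-- The Ω-shift duality matrix: [[1, A·1], [0, 1]] on the first 6 coordinates,
identity on the 8 transverse coordinates. -/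
def UOmega (A : ℝ) : Matrix ((Fin 3 ⊕ Fin 3) ⊕ Fin 8) ((Fin 3 ⊕ Fin 3) ⊕ Fin 8) ℝ :=
  fromBlocks (fromBlocks 1 (A • 1) 0 1) 0 0 1

/-- A 3×3 real symmetric (Hermitian) matrix is Lorentzian if it has exactly one negative
and two positive eigenvalues. -/
def Lorentzian3 (g : Matrix (Fin 3) (Fin 3) ℝ) : Prop :=
  ∃ hg : g.IsHermitian,
    {i | hg.eigenvalues i < 0}.ncard = 1 ∧ {i | 0 < hg.eigenvalues i}.ncard = 2

theorem lorentzian_det_neg {g : Matrix (Fin 3) (Fin 3) ℝ} (h : Lorentzian3 g) : g.det < 0 := by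
  obtain ⟨hg, h1, h2⟩ := h
  set ev := hg.eigenvalues with hev
  obtain ⟨j, hj⟩ := Set.ncard_eq_one.mp h1
  obtain ⟨x, y, hxy, hxyset⟩ := Set.ncard_eq_two.mp h2
  have hjneg : ev j < 0 := by have : j ∈ {i | ev i < 0} := by rw [hj]; rfl
                              exact this
  have hxpos : 0 < ev x := by
    have : x ∈ {i | 0 < ev i} := by rw [hxyset]; simp
    exact this
  have hypos : 0 < ev y := by
    have : y ∈ {i | 0 < ev i} := by rw [hxyset]; simp
    exact this
  have hjx : j ≠ x := by rintro rfl; linarith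
  have hjy : j ≠ y := by rintro rfl; linarith
  have huniv : ({j, x, y} : Finset (Fin 3)) = Finset.univ := by
    apply Finset.eq_univ_of_card
    rw [Finset.card_insert_of_notMem (by simp [hjx, hjy]),
      Finset.card_insert_of_notMem (by simp [hxy])]
    simp
  have hdet : g.det = ∏ i, ev i := by
    have := hg.det_eq_prod_eigenvalues
    simpa using this
  rw [hdet, ← huniv, Finset.prod_insert (by simp [hjx, hjy]),
    Finset.prod_insert (by simp [hxy]), Finset.prod_singleton]
  exact mul_neg_of_neg_of_pos hjneg (mul_pos hxpos hypos)

/-- Timelike Ω-shift with f := (1+A·c)² − A²·|g| ≤ 0: the dual background cannot be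
described by a metric and 3-form alone. -/
theorem stmt_12 (g : Matrix (Fin 3) (Fin 3) ℝ) (g8 : Matrix (Fin 8) (Fin 8) ℝ)
    (hg : Lorentzian3 g) (hg8 : g8.IsSymm) (hg8det : g8.det ≠ 0) (c A : ℝ)
    (hf : (1 + A * c) ^ 2 - A ^ 2 * (-g.det) ≤ 0) :
    ¬ ∃ (g' : Matrix (Fin 3) (Fin 3) ℝ) (g8' : Matrix (Fin 8) (Fin 8) ℝ) (c' : ℝ),
        g'.IsSymm ∧ g'.det ≠ 0 ∧ g8'.IsSymm ∧ g8'.det ≠ 0 ∧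
        (UOmega A)ᵀ * MC g g8 c * UOmega A = MC g' g8' c' := by
  rintro ⟨g', g8', c', hg's, hg'det, hg8's, hg8'det, h⟩
  have hd : g.det < 0 := lorentzian_det_neg hg
  set s : ℝ := |g.det * g8.det| ^ (-(1 : ℝ) / 2) with hs_def
  set s' : ℝ := |g'.det * g8'.det| ^ (-(1 : ℝ) / 2) with hs'_def
  have hs : 0 < s := Real.rpow_pos_of_pos (abs_pos.mpr (mul_ne_zero hd.ne hg8det)) _
  have hs' : 0 < s' := Real.rpow_pos_of_pos (abs_pos.mpr (mul_ne_zero hg'det hg8'det)) _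
  set ε : ℝ := A ^ 2 + (1 + A * c) ^ 2 / g.det with hε_def
  have hε : 0 ≤ ε := by
    have h1 : -A ^ 2 ≤ (1 + A * c) ^ 2 / g.det := by
      rw [le_div_iff_of_neg hd]; nlinarith
    rw [hε_def]; linarith
  have hM : (s * ε) • g = (s' * g'.det⁻¹) • g' := by
    ext i j
    have h' := congrFun (congrFun h (Sum.inl (Sum.inr i))) (Sum.inl (Sum.inr j))
    simp only [MC, UOmega, mul_apply, Fintype.sum_sum_type, fromBlocks, transpose_apply,
      Matrix.smul_apply, smul_eq_mul, of_apply, Sum.elim_inl, Sum.elim_inr, one_apply,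
      Matrix.zero_apply, mul_zero, zero_mul, mul_one, mul_ite, ite_mul, Finset.sum_ite_eq,
      Finset.sum_ite_eq', Finset.mem_univ, if_true, add_zero, zero_add,
      Finset.sum_const_zero] at h'
    simp only [Matrix.smul_apply, smul_eq_mul]
    rw [hε_def, hs_def, hs'_def]
    linear_combination h'
  have hdet : (s * ε) ^ 3 * g.det = (s' * g'.det⁻¹) ^ 3 * g'.det := by
    have := congrArg Matrix.det hM
    rwa [det_smul, det_smul, Fintype.card_fin] at this
  have hrhs : (s' * g'.det⁻¹) ^ 3 * g'.det = s' ^ 3 * (g'.det⁻¹) ^ 2 := by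
    field_simp
  have hpos : 0 < s' ^ 3 * (g'.det⁻¹) ^ 2 := by positivity
  have hnp : (s * ε) ^ 3 * g.det ≤ 0 :=
    mul_nonpos_of_nonneg_of_nonpos (by positivity) hd.le
  rw [hrhs] at hdet
  rw [hdet] at hnp
  exact absurd hnp (not_le.mpr hpos)
end

section
/- Let g be a Lorentzian 3×3 real symmetric matrix, g8 a positive-definite 8×8 real symmetric matrix, c, A ∈ ℝ, set V := c/√|g|, and let θ ∈ ℝ satisfy p := cosh θ + V·sinh θ > 0. Then U_Ω(A)ᵀ · M_C(g, g8, c) · U_Ω(A) = M_check( p^(4/3)·g, p^(−2/3)·g8, √|g|·p·(V·cosh θ + sinh θ), (A·√|g|·cosh θ + (1 + A·c)·sinh θ)/(√|g|·p) ). In particular the dual fields of the timelike Ω-shift form a one-parameter family, indexed by the local SO(1,1) angle θ, all describing the same generalised metric. -/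
open Matrix

/-- The checked-frame generalised metric, with both a 3-form c and a trivector ω. -/
noncomputable def Mcheck (g : Matrix (Fin 3) (Fin 3) ℝ) (g8 : Matrix (Fin 8) (Fin 8) ℝ)
    (c ω : ℝ) : Matrix ((Fin 3 ⊕ Fin 3) ⊕ Fin 8) ((Fin 3 ⊕ Fin 3) ⊕ Fin 8) ℝ :=
  |g.det * g8.det| ^ (-(1 : ℝ) / 2) •
    fromBlocks
      (fromBlocks ((1 + c ^ 2 / g.det) • g)
        ((ω + c * (1 + c * ω) / g.det) • g)
        ((ω + c * (1 + c * ω) / g.det) • g)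
        ((ω ^ 2 + (1 + c * ω) ^ 2 / g.det) • g))
      0 0 g8

lemma det_neg_of_lorentzian {g : Matrix (Fin 3) (Fin 3) ℝ} (hg : Lorentzian3 g) : g.det < 0 := by
  obtain ⟨h, h1, h2⟩ := hg
  obtain ⟨a, ha⟩ := Set.ncard_eq_one.mp h1
  have hunion : {i | h.eigenvalues i < 0} ∪ {i | 0 < h.eigenvalues i} = Set.univ := by
    apply Set.eq_of_subset_of_ncard_le (Set.subset_univ _)
    rw [Set.ncard_union_eq ?dis (Set.toFinite _) (Set.toFinite _), h1, h2]
    · simp [Set.ncard_univ]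
    case dis =>
      rw [Set.disjoint_left]
      intro i hi hi'
      exact absurd hi' (by simp at hi ⊢; linarith [hi])
  have hneg : h.eigenvalues a < 0 := by
    have : a ∈ ({a} : Set (Fin 3)) := rfl
    rw [← ha] at this; exact this
  have hpos : ∀ i, i ≠ a → 0 < h.eigenvalues i := by
    intro i hi
    have := Set.eq_univ_iff_forall.mp hunion i
    rcases this with h' | h'
    · exfalso; apply hi; have : i ∈ ({a} : Set (Fin 3)) := ha ▸ h'; exact this
    · exact h'
  have hdet : g.det = ∏ i, h.eigenvalues i := by
    simpa using h.det_eq_prod_eigenvalues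
  rw [hdet, Fin.prod_univ_three]
  fin_cases a <;>
    simp only [Fin.isValue, Fin.zero_eta, Fin.mk_one, Fin.reduceFinMk] at hneg hpos <;>
    [ nlinarith [hneg, mul_pos (hpos 1 (by decide)) (hpos 2 (by decide))];
      nlinarith [hneg, mul_pos (hpos 0 (by decide)) (hpos 2 (by decide))];
      nlinarith [hneg, mul_pos (hpos 0 (by decide)) (hpos 1 (by decide))] ]

set_option maxRecDepth 4000 in
set_option maxHeartbeats 4000000 in
lemma omega_shift_aux {n8 : Type} [Fintype n8] [DecidableEq n8]
    (hc8 : Fintype.card n8 = 8)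
    (g : Matrix (Fin 3) (Fin 3) ℝ) (g8 : Matrix n8 n8 ℝ)
    (hd : g.det < 0) (c A θ : ℝ)
    (hp : 0 < Real.cosh θ + c / Real.sqrt (-g.det) * Real.sinh θ) :
    (fromBlocks (fromBlocks 1 (A • 1) 0 1) 0 0 (1 : Matrix n8 n8 ℝ))ᵀ *
        (|g.det * g8.det| ^ (-(1 : ℝ) / 2) •
          fromBlocks
            (fromBlocks ((1 + c ^ 2 / g.det) • g) ((c / g.det) • g) ((c / g.det) • g)
              ((1 / g.det) • g))
            0 0 g8) *
        fromBlocks (fromBlocks 1 (A • 1) 0 1) 0 0 1 =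
      |((Real.cosh θ + c / Real.sqrt (-g.det) * Real.sinh θ) ^ ((4 : ℝ) / 3) • g).det * ((Real.cosh θ + c / Real.sqrt (-g.det) * Real.sinh θ) ^ (-(2 : ℝ) / 3) • g8).det| ^ (-(1 : ℝ) / 2) •
        fromBlocks
          (fromBlocks ((1 + (Real.sqrt (-g.det) * (Real.cosh θ + c / Real.sqrt (-g.det) * Real.sinh θ) * (c / Real.sqrt (-g.det) * Real.cosh θ + Real.sinh θ)) ^ 2 / ((Real.cosh θ + c / Real.sqrt (-g.det) * Real.sinh θ) ^ ((4 : ℝ) / 3) • g).det) • ((Real.cosh θ + c / Real.sqrt (-g.det) * Real.sinh θ) ^ ((4 : ℝ) / 3) • g))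
            ((((A * Real.sqrt (-g.det) * Real.cosh θ + (1 + A * c) * Real.sinh θ) / (Real.sqrt (-g.det) * (Real.cosh θ + c / Real.sqrt (-g.det) * Real.sinh θ))) + (Real.sqrt (-g.det) * (Real.cosh θ + c / Real.sqrt (-g.det) * Real.sinh θ) * (c / Real.sqrt (-g.det) * Real.cosh θ + Real.sinh θ)) * (1 + (Real.sqrt (-g.det) * (Real.cosh θ + c / Real.sqrt (-g.det) * Real.sinh θ) * (c / Real.sqrt (-g.det) * Real.cosh θ + Real.sinh θ)) * ((A * Real.sqrt (-g.det) * Real.cosh θ + (1 + A * c) * Real.sinh θ) / (Real.sqrt (-g.det) * (Real.cosh θ + c / Real.sqrt (-g.det) * Real.sinh θ)))) / ((Real.cosh θ + c / Real.sqrt (-g.det) * Real.sinh θ) ^ ((4 : ℝ) / 3) • g).det) • ((Real.cosh θ + c / Real.sqrt (-g.det) * Real.sinh θ) ^ ((4 : ℝ) / 3) • g))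
            ((((A * Real.sqrt (-g.det) * Real.cosh θ + (1 + A * c) * Real.sinh θ) / (Real.sqrt (-g.det) * (Real.cosh θ + c / Real.sqrt (-g.det) * Real.sinh θ))) + (Real.sqrt (-g.det) * (Real.cosh θ + c / Real.sqrt (-g.det) * Real.sinh θ) * (c / Real.sqrt (-g.det) * Real.cosh θ + Real.sinh θ)) * (1 + (Real.sqrt (-g.det) * (Real.cosh θ + c / Real.sqrt (-g.det) * Real.sinh θ) * (c / Real.sqrt (-g.det) * Real.cosh θ + Real.sinh θ)) * ((A * Real.sqrt (-g.det) * Real.cosh θ + (1 + A * c) * Real.sinh θ) / (Real.sqrt (-g.det) * (Real.cosh θ + c / Real.sqrt (-g.det) * Real.sinh θ)))) / ((Real.cosh θ + c / Real.sqrt (-g.det) * Real.sinh θ) ^ ((4 : ℝ) / 3) • g).det) • ((Real.cosh θ + c / Real.sqrt (-g.det) * Real.sinh θ) ^ ((4 : ℝ) / 3) • g))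
            ((((A * Real.sqrt (-g.det) * Real.cosh θ + (1 + A * c) * Real.sinh θ) / (Real.sqrt (-g.det) * (Real.cosh θ + c / Real.sqrt (-g.det) * Real.sinh θ))) ^ 2 + (1 + (Real.sqrt (-g.det) * (Real.cosh θ + c / Real.sqrt (-g.det) * Real.sinh θ) * (c / Real.sqrt (-g.det) * Real.cosh θ + Real.sinh θ)) * ((A * Real.sqrt (-g.det) * Real.cosh θ + (1 + A * c) * Real.sinh θ) / (Real.sqrt (-g.det) * (Real.cosh θ + c / Real.sqrt (-g.det) * Real.sinh θ)))) ^ 2 / ((Real.cosh θ + c / Real.sqrt (-g.det) * Real.sinh θ) ^ ((4 : ℝ) / 3) • g).det) • ((Real.cosh θ + c / Real.sqrt (-g.det) * Real.sinh θ) ^ ((4 : ℝ) / 3) • g)))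
          0 0 ((Real.cosh θ + c / Real.sqrt (-g.det) * Real.sinh θ) ^ (-(2 : ℝ) / 3) • g8) := by
  set s := Real.sqrt (-g.det) with hsdef
  have hs : 0 < s := Real.sqrt_pos.2 (by linarith)
  have hs2 : s ^ 2 = -g.det := Real.sq_sqrt (by linarith)
  have hgdet : g.det = -s ^ 2 := by linarith
  set C := Real.cosh θ with hCdef
  set S := Real.sinh θ with hSdef
  have hCS : C ^ 2 = S ^ 2 + 1 := Real.cosh_sq θ
  set p := C + c / s * S with hpdef
  set t := p ^ ((1 : ℝ) / 3) with htdef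
  have ht0 : 0 < t := Real.rpow_pos_of_pos hp _
  have ht3 : t ^ 3 = p := by
    rw [htdef, ← Real.rpow_natCast (p ^ ((1 : ℝ) / 3)) 3, ← Real.rpow_mul hp.le]
    norm_num
  have hu : p ^ ((4 : ℝ) / 3) = t ^ 4 := by
    rw [htdef, ← Real.rpow_natCast (p ^ ((1 : ℝ) / 3)) 4, ← Real.rpow_mul hp.le]
    norm_num
  have hw : p ^ (-(2 : ℝ) / 3) = (t ^ 2)⁻¹ := by
    rw [show (-(2 : ℝ) / 3) = -(2 / 3 : ℝ) by norm_num, Real.rpow_neg hp.le, htdef,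
      ← Real.rpow_natCast (p ^ ((1 : ℝ) / 3)) 2, ← Real.rpow_mul hp.le]
    norm_num
  rw [hu, hw]
  simp only [Matrix.fromBlocks_transpose, Matrix.transpose_one, Matrix.transpose_smul,
    Matrix.transpose_zero, Matrix.mul_smul, Matrix.smul_mul, Matrix.fromBlocks_multiply,
    Matrix.one_mul, Matrix.mul_one, Matrix.zero_mul, Matrix.mul_zero, add_zero, zero_add,
    smul_smul, smul_add, Matrix.det_smul, Fintype.card_fin, hc8, Matrix.fromBlocks_smul,
    smul_zero]
  have hpref : |(t ^ 4) ^ 3 * g.det * ((t ^ 2)⁻¹ ^ 8 * g8.det)| ^ (-(1:ℝ) / 2) =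
      t ^ 2 * |g.det * g8.det| ^ (-(1:ℝ) / 2) := by
    have h1 : (t ^ 4) ^ 3 * g.det * ((t ^ 2)⁻¹ ^ 8 * g8.det) = (t ^ 4)⁻¹ * (g.det * g8.det) := by
      field_simp
    rw [h1, abs_mul, abs_of_pos (by positivity : (0:ℝ) < (t ^ 4)⁻¹),
      Real.mul_rpow (by positivity) (abs_nonneg _)]
    have h2 : ((t ^ 4)⁻¹ : ℝ) ^ (-(1:ℝ) / 2) = t ^ 2 := by
      rw [← Real.rpow_natCast t 4, ← Real.rpow_neg ht0.le, ← Real.rpow_natCast t 2,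
        ← Real.rpow_mul ht0.le]
      norm_num
    rw [h2]
  have hP : s * t ^ 3 = s * C + c * S := by
    rw [ht3, hpdef]
    field_simp
  rw [hpref, Matrix.fromBlocks_inj]
  refine ⟨?_, rfl, rfl, ?_⟩
  · rw [Matrix.fromBlocks_inj]
    refine ⟨?_, ?_, ?_, ?_⟩
    · congr 1
      rw [hgdet, ← ht3]
      set K := |(-s^2 : ℝ) * g8.det| ^ (-(1:ℝ) / 2) with hK
      field_simp
      linear_combination ((-1)*C*K*s + (-1)*c*K*S + (-1)*K*s*t^3) * hP + ((1)*c^2*K + (-1)*K*s^2) * hCS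
    · rw [← add_smul]
      congr 1
      rw [hgdet, ← ht3]
      set K := |(-s^2 : ℝ) * g8.det| ^ (-(1:ℝ) / 2) with hK
      field_simp
      linear_combination ((-2)*c*C*K*s*S*A + (-1)*C*K*s*S + (-1)*c^2*K*S^2*A + (-1)*c^2*K*A + (-1)*C*K*s^2*t^3*A + (-1)*c*K*S^2 + (-1)*c*K + (-1)*c*K*s*t^3*S*A + (-1)*K*s*t^3*S + (-1)*K*s^2*S^2*A) * hP + ((1)*c^2*C*K*s*A + (1)*c^3*K*S*A + (1)*c^2*K*S + (-1)*K*s^2*S + (-1)*K*s^3*t^3*A) * hCS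
    · rw [← add_smul]
      congr 1
      rw [hgdet, ← ht3]
      set K := |(-s^2 : ℝ) * g8.det| ^ (-(1:ℝ) / 2) with hK
      field_simp
      linear_combination ((-2)*c*C*K*s*S*A + (-1)*C*K*s*S + (-1)*c^2*K*S^2*A + (-1)*c^2*K*A + (-1)*C*K*s^2*t^3*A + (-1)*c*K*S^2 + (-1)*c*K + (-1)*c*K*s*t^3*S*A + (-1)*K*s*t^3*S + (-1)*K*s^2*S^2*A) * hP + ((1)*c^2*C*K*s*A + (1)*c^3*K*S*A + (1)*c^2*K*S + (-1)*K*s^2*S + (-1)*K*s^3*t^3*A) * hCS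
    · rw [← add_smul, ← add_smul, ← add_smul]
      congr 1
      rw [hgdet, ← ht3]
      set K := |(-s^2 : ℝ) * g8.det| ^ (-(1:ℝ) / 2) with hK
      field_simp
      linear_combination ((-2)*c*C*K*s*A + (-2)*K*s^2*S*A + (-1)*C*K*s + (-1)*C*K*s^3*S^2*A^2 + (-3)*c^2*C*K*s*S^2*A^2 + (-4)*c*C*K*s*S^2*A + (-3)*c*K*s^2*S^3*A^2 + (-1)*C*K*s*S^2 + (-1)*c^2*C*K*s*A^2 + (-1)*c^3*K*S^3*A^2 + (-1)*c^3*K*S*A^2 + (-2)*c*C*K*s^2*t^3*S*A^2 + (-2)*c^2*K*S^3*A + (-2)*c^2*K*S*A + (-2)*C*K*s^2*t^3*S*A + (-1)*K*s^3*t^3*S^2*A^2 + (-1)*c*K*S^3 + (-1)*c*K*S + (-1)*c^2*K*s*t^3*S^2*A^2 + (-1)*c^2*K*s*t^3*A^2 + (-2)*c*K*s*t^3*S^2*A + (-2)*c*K*s*t^3*A + (-1)*K*s*t^3*S^2 + (-1)*K*s*t^3 + (-2)*c*K*s^2*S*A^2 + (-2)*K*s^2*S^3*A) * hP + ((1)*c^2*C^2*K*s^2*A^2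 + (2)*c*C*K*s^3*S*A^2 + (2)*c^3*C*K*s*S*A^2 + (2)*c^2*K*s^2*S^2*A^2 + (2)*c^2*C*K*s*S*A + (1)*c^4*K*S^2*A^2 + (2)*c^3*K*S^2*A + (1)*c^2*K*S^2 + (-1)*K*s^2 + (-1)*K*s^2*S^2 + (-2)*c*K*s^3*t^3*S*A^2 + (-2)*K*s^3*t^3*S*A + (-1)*K*s^4*t^6*A^2) * hCS
  · congr 1
    field_simp

/-- Timelike Ω-shift in the checked frame: for Lorentzian g, positive-definite g8,
V := c/√|g| and any θ with p := cosh θ + V·sinh θ > 0, the dual generalised metric equals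
M_check(p^(4/3)·g, p^(−2/3)·g8, √|g|·p·(V·cosh θ + sinh θ),
(A·√|g|·cosh θ + (1+A·c)·sinh θ)/(√|g|·p)): a one-parameter family of dual fields. -/
theorem stmt_13 (g : Matrix (Fin 3) (Fin 3) ℝ) (g8 : Matrix (Fin 8) (Fin 8) ℝ)
    (hg : Lorentzian3 g) (hg8 : g8.PosDef) (c A θ : ℝ)
    (hp : 0 < Real.cosh θ + c / Real.sqrt (-g.det) * Real.sinh θ) :
    (UOmega A)ᵀ * MC g g8 c * UOmega A =
      Mcheck
        ((Real.cosh θ + c / Real.sqrt (-g.det) * Real.sinh θ) ^ ((4 : ℝ) / 3) • g)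
        ((Real.cosh θ + c / Real.sqrt (-g.det) * Real.sinh θ) ^ (-(2 : ℝ) / 3) • g8)
        (Real.sqrt (-g.det) * (Real.cosh θ + c / Real.sqrt (-g.det) * Real.sinh θ) *
          (c / Real.sqrt (-g.det) * Real.cosh θ + Real.sinh θ))
        ((A * Real.sqrt (-g.det) * Real.cosh θ + (1 + A * c) * Real.sinh θ) /
          (Real.sqrt (-g.det) * (Real.cosh θ + c / Real.sqrt (-g.det) * Real.sinh θ))) := by
  have hd : g.det < 0 := det_neg_of_lorentzian hg
  rw [MC, Mcheck, UOmega]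
  exact omega_shift_aux (Fintype.card_fin 8) g g8 hd c A θ hp
end
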